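/- Assume F(P) ≠ ∅, that P is closed in the weak topology σ(X, Y), and that Q is closed in the weak topology σ(Z, W). Then the closure of K in the weak topology σ(Y × ℝ, X × ℝ) equals M. -/

import Mathlib

open Set Filter

section Aux
open Topology

lemma weak_dual_repr {E F : Type*} [AddCommGroup E] [Module ℝ E] [AddCommGroup F] [Module ℝ F]
    (B : E →ₗ[ℝ] F →ₗ[ℝ] ℝ) (f : WeakBilin B →L[ℝ] ℝ) :
    ∃ y : F, ∀ x : E, f x = B x y := by
  have h1 : {x : WeakBilin B | ‖f x‖ < 1} ∈ 𝓝 (0 : WeakBilin B) := by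
    have hopen : IsOpen {x : WeakBilin B | ‖f x‖ < 1} := by
      have : {x : WeakBilin B | ‖f x‖ < 1} = f ⁻¹' Metric.ball 0 1 := by
        ext x; simp [Metric.mem_ball, Real.dist_eq]
      rw [this]
      exact f.continuous.isOpen_preimage _ Metric.isOpen_ball
    exact hopen.mem_nhds (by simp)
  obtain ⟨U, hU, hsub⟩ := (LinearMap.hasBasis_weakBilin B).mem_iff.mp h1
  obtain ⟨s, r, hr, rfl⟩ := (SeminormFamily.basisSets_iff _).mp hU
  have hker : ∀ x : E, (∀ y ∈ s, B x y = 0) → f x = 0 := by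
    intro x hx
    by_contra hfx
    have hmem : ∀ t : ℝ, (t • x : WeakBilin B) ∈ Seminorm.ball (s.sup (B.toSeminormFamily)) 0 r := by
      intro t
      rw [Seminorm.mem_ball_zero]
      refine Seminorm.finset_sup_apply_lt hr ?_
      intro i hi
      simp [LinearMap.toSeminormFamily_apply, hx i hi]
      exact hr
    have := hsub (hmem ((2 : ℝ) / f x))
    replace this : ‖(2:ℝ) / f x‖ * ‖f x‖ < 1 := by
      rw [← norm_mul, ← smul_eq_mul]
      exact (congrArg norm (f.map_smul ((2:ℝ) / f x) x)).symm.trans_lt (by exact this)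
    rw [norm_div] at this
    have h2 : ‖(2:ℝ)‖ / ‖f x‖ * ‖f x‖ = 2 := by
      field_simp
      norm_num
    rw [h2] at this
    linarith
  classical
  have hιf : Finite {y // y ∈ s} := inferInstance
  have hspan : (f : WeakBilin B →ₗ[ℝ] ℝ) ∈ Submodule.span ℝ
      (Set.range fun i : {y // y ∈ s} => B.flip (i : F)) := by
    apply mem_span_of_iInf_ker_le_ker
    intro x hx
    simp only [Submodule.mem_iInf, LinearMap.mem_ker, LinearMap.flip_apply] at hx
    exact hker x fun y hy => hx ⟨y, hy⟩
  have hle : Submodule.span ℝ (Set.range fun i : {y // y ∈ s} => B.flip (i : F))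
      ≤ LinearMap.range B.flip := by
    rw [Submodule.span_le]
    rintro _ ⟨i, rfl⟩
    exact ⟨i, rfl⟩
  obtain ⟨y, hy⟩ := hle hspan
  refine ⟨y, fun x => ?_⟩
  have := congrFun (congrArg (DFunLike.coe) hy) x
  simp only [LinearMap.flip_apply, ContinuousLinearMap.coe_coe] at this
  exact this.symm

lemma bipolar_mem {E F : Type*} [AddCommGroup E] [Module ℝ E] [AddCommGroup F] [Module ℝ F]
    (B : E →ₗ[ℝ] F →ₗ[ℝ] ℝ) (P : Set E)
    (hcone : ∀ s t : ℝ, 0 ≤ s → 0 ≤ t → ∀ u ∈ P, ∀ v ∈ P, s • u + t • v ∈ P)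
    (hne : P.Nonempty)
    (hclosed : IsClosed (X := WeakBilin B) P)
    (x : E) (hx : ∀ y : F, (∀ u ∈ P, 0 ≤ B u y) → 0 ≤ B x y) : x ∈ P := by
  by_contra hxP
  have hconv : Convex ℝ (P : Set (WeakBilin B)) := by
    intro u hu v hv a b ha hb _
    exact hcone a b ha hb u hu v hv
  obtain ⟨f, u, hfP, hfx⟩ :=
    geometric_hahn_banach_closed_point (E := WeakBilin B) hconv hclosed hxP
  obtain ⟨p0, hp0⟩ := hne
  have h0P : (0 : E) ∈ P := by
    have := hcone 0 0 le_rfl le_rfl p0 hp0 p0 hp0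
    simpa using this
  have hu0 : 0 < u := by simpa using hfP 0 h0P
  have hfle : ∀ a ∈ P, f a ≤ 0 := by
    intro a ha
    by_contra hfa
    push_neg at hfa
    have hmem : (u / f a) • a ∈ P := by
      have := hcone (u / f a) 0 (le_of_lt (div_pos hu0 hfa)) le_rfl a ha a ha
      simpa using this
    have := hfP _ hmem
    replace this : (u / f a) • f a < u := (f.map_smul (u / f a) a).symm.trans_lt this
    simp only [smul_eq_mul] at this
    rw [div_mul_cancel₀ _ (ne_of_gt hfa)] at this
    exact lt_irrefl _ this
  obtain ⟨y, hy⟩ := weak_dual_repr B f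
  have hny : ∀ u ∈ P, 0 ≤ B u (-y) := by
    intro a ha
    rw [map_neg]
    have := hfle a ha
    rw [hy a] at this
    linarith
  have := hx (-y) hny
  rw [map_neg] at this
  have hfxy := hy x
  have : f x ≤ 0 := by rw [hfxy]; linarith
  linarith

lemma no_lower_aux {d v u : ℝ} (hd : d < 0) (h : ∀ t : ℝ, 0 ≤ t → v - t * d < u) : False := by
  set t : ℝ := max 0 ((v - u) / d) with ht
  have ht0 : 0 ≤ t := le_max_left _ _
  have h1 : (v - u) / d ≤ t := le_max_right _ _
  have h2 : t * d ≤ v - u := by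
    have := mul_le_mul_of_nonpos_right h1 (le_of_lt hd)
    rwa [div_mul_cancel₀ _ (ne_of_lt hd)] at this
  have := h t ht0
  linarith

def pairYR {X Y : Type*} [AddCommGroup X] [Module ℝ X] [AddCommGroup Y] [Module ℝ Y]
    (pX : X →ₗ[ℝ] Y →ₗ[ℝ] ℝ) : (Y × ℝ) →ₗ[ℝ] (X × ℝ) →ₗ[ℝ] ℝ where
  toFun p :=
    { toFun := fun q => pX q.1 p.1 + p.2 * q.2
      map_add' := fun q q' => by
        show pX (q + q').1 p.1 + p.2 * (q + q').2 = _
        simp only [Prod.fst_add, Prod.snd_add, map_add, LinearMap.add_apply]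
        ring
      map_smul' := fun s q => by
        show pX (s • q).1 p.1 + p.2 * (s • q).2 = _
        simp only [Prod.smul_fst, Prod.smul_snd, map_smul, LinearMap.smul_apply, smul_eq_mul,
          RingHom.id_apply]
        ring }
  map_add' p p' := LinearMap.ext fun q => by
    show pX q.1 (p + p').1 + (p + p').2 * q.2 = pX q.1 p.1 + p.2 * q.2 + (pX q.1 p'.1 + p'.2 * q.2)
    simp only [Prod.fst_add, Prod.snd_add, map_add]
    ring
  map_smul' s p := LinearMap.ext fun q => by
    show pX q.1 (s • p).1 + (s • p).2 * q.2 = s * (pX q.1 p.1 + p.2 * q.2)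
    simp only [Prod.smul_fst, Prod.smul_snd, map_smul, smul_eq_mul]
    ring

@[simp] lemma pairYR_apply {X Y : Type*} [AddCommGroup X] [Module ℝ X] [AddCommGroup Y]
    [Module ℝ Y] (pX : X →ₗ[ℝ] Y →ₗ[ℝ] ℝ) (p : Y × ℝ) (q : X × ℝ) :
    pairYR pX p q = pX q.1 p.1 + p.2 * q.2 := rfl

end Aux

theorem closure_K_eq_M
    {X Y Z W : Type*} [AddCommGroup X] [Module ℝ X] [AddCommGroup Y] [Module ℝ Y]
    [AddCommGroup Z] [Module ℝ Z] [AddCommGroup W] [Module ℝ W]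
    (pX : X →ₗ[ℝ] Y →ₗ[ℝ] ℝ) (pZ : Z →ₗ[ℝ] W →ₗ[ℝ] ℝ)
    (A : X →ₗ[ℝ] Z) (Astar : W →ₗ[ℝ] Y)
    (hadj : ∀ (x : X) (w : W), pX x (Astar w) = pZ (A x) w)
    (P : Set X) (Q : Set Z)
    (hPne : P.Nonempty)
    (hPcone : ∀ s t : ℝ, 0 ≤ s → 0 ≤ t → ∀ u ∈ P, ∀ v ∈ P, s • u + t • v ∈ P)
    (hQne : Q.Nonempty)
    (hQcone : ∀ s t : ℝ, 0 ≤ s → 0 ≤ t → ∀ u ∈ Q, ∀ v ∈ Q, s • u + t • v ∈ Q)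
    (b : Z) (c : Y)
    (Pstar : Set Y) (hPstar : Pstar = {y : Y | ∀ x ∈ P, 0 ≤ pX x y})
    (Qstar : Set W) (hQstar : Qstar = {w : W | ∀ z ∈ Q, 0 ≤ pZ z w})
    (FP : Set X) (hFP : FP = {x ∈ P | A x - b ∈ Q})
    (FD : Set W) (hFD : FD = {w ∈ Qstar | c - Astar w ∈ Pstar})
    (hXsep : ∀ x : X, (∀ y : Y, pX x y = 0) → x = 0)
    (hYsep : ∀ y : Y, (∀ x : X, pX x y = 0) → y = 0)
    (hZsep : ∀ z : Z, (∀ w : W, pZ z w = 0) → z = 0)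
    (hWsep : ∀ w : W, (∀ z : Z, pZ z w = 0) → w = 0)
    (Kset : Set (Y × ℝ))
    (hK : Kset = {p : Y × ℝ | ∃ w ∈ Qstar, ∃ y ∈ Pstar, p.1 = c - Astar w - y ∧ p.2 ≤ pZ b w})
    (Mset : Set (Y × ℝ))
    (hM : Mset = {p : Y × ℝ | ∀ x ∈ FP, p.2 ≤ pX x (c - p.1)})
    (hFPne : FP.Nonempty)
    (hPclosed : @IsClosed X
      (TopologicalSpace.induced (fun x : X => (fun y : Y => pX x y)) Pi.topologicalSpace) P)
    (hQclosed : @IsClosed Z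
      (TopologicalSpace.induced (fun z : Z => (fun w : W => pZ z w)) Pi.topologicalSpace) Q) :
    @closure (Y × ℝ)
      (TopologicalSpace.induced
        (fun p : Y × ℝ => (fun q : X × ℝ => pX q.1 p.1 + p.2 * q.2))
        Pi.topologicalSpace) Kset = Mset := by
  have hPc : IsClosed (X := WeakBilin pX) P := hPclosed
  have hQc : IsClosed (X := WeakBilin pZ) Q := hQclosed
  show closure (X := WeakBilin (pairYR pX)) Kset = Mset
  -- basic cone facts
  have h0P : (0 : X) ∈ P := by
    obtain ⟨p0, hp0⟩ := hPne
    simpa using hPcone 0 0 le_rfl le_rfl p0 hp0 p0 hp0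
  have h0Ps : (0 : Y) ∈ Pstar := by rw [hPstar]; intro x _; simp
  have h0Qs : (0 : W) ∈ Qstar := by rw [hQstar]; intro z _; simp
  have hPsConv : ∀ a b' : ℝ, 0 ≤ a → 0 ≤ b' → ∀ u ∈ Pstar, ∀ v ∈ Pstar,
      a • u + b' • v ∈ Pstar := by
    intro a b' ha hb' u hu v hv
    rw [hPstar] at *
    intro x hx
    simp only [map_add, map_smul, smul_eq_mul]
    exact add_nonneg (mul_nonneg ha (hu x hx)) (mul_nonneg hb' (hv x hx))
  have hQsConv : ∀ a b' : ℝ, 0 ≤ a → 0 ≤ b' → ∀ u ∈ Qstar, ∀ v ∈ Qstar,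
      a • u + b' • v ∈ Qstar := by
    intro a b' ha hb' u hu v hv
    rw [hQstar] at *
    intro z hz
    simp only [map_add, map_smul, smul_eq_mul]
    exact add_nonneg (mul_nonneg ha (hu z hz)) (mul_nonneg hb' (hv z hz))
  -- K ⊆ M
  have hKM : Kset ⊆ Mset := by
    rintro ⟨y1, r⟩ hp
    rw [hK] at hp
    obtain ⟨w, hw, y, hy, h1, h2⟩ := hp
    rw [hM]
    intro x hx
    rw [hFP] at hx
    obtain ⟨hxP, hxQ⟩ := hx
    simp only at h1 h2 ⊢
    rw [h1]
    have e1 : c - (c - Astar w - y) = Astar w + y := by abel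
    rw [e1, map_add, hadj]
    have e2 : pZ (A x) w = pZ (A x - b) w + pZ b w := by
      rw [map_sub, LinearMap.sub_apply]; ring
    rw [e2]
    have hy' : 0 ≤ pX x y := by rw [hPstar] at hy; exact hy x hxP
    have hw' : 0 ≤ pZ (A x - b) w := by rw [hQstar] at hw; exact hw _ hxQ
    linarith
  -- M is closed
  have hMclosed : IsClosed (X := WeakBilin (pairYR pX)) Mset := by
    have hMeq : Mset = ⋂ x ∈ FP, {p : WeakBilin (pairYR pX) | pairYR pX p (x, 1) ≤ pX x c} := by
      rw [hM]
      ext p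
      simp only [mem_iInter, mem_setOf_eq, pairYR_apply, mul_one]
      refine Iff.trans ?_ (Set.mem_iInter₂ (γ := WeakBilin (pairYR pX))).symm
      show _ ↔ ∀ x ∈ FP, pairYR pX p (x, 1) ≤ pX x c
      simp only [pairYR_apply, mul_one]
      constructor
      · intro h x hx
        have h1 := h x hx
        rw [map_sub] at h1
        show pX x p.1 + p.2 ≤ pX x c
        linarith
      · intro h x hx
        have h1 : pX x p.1 + p.2 ≤ pX x c := h x hx
        rw [map_sub]
        linarith
    rw [hMeq]
    exact isClosed_biInter fun x _ =>
      isClosed_le (WeakBilin.eval_continuous (pairYR pX) (x, 1)) continuous_const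
  refine Subset.antisymm (closure_minimal hKM hMclosed) ?_
  -- K convex
  have hKconv : Convex ℝ (Kset : Set (WeakBilin (pairYR pX))) := by
    rw [hK]
    rintro ⟨y1, r1⟩ h1 ⟨y2, r2⟩ h2 a a' ha ha' haa
    obtain ⟨w1, hw1, z1, hz1, e1, f1⟩ := h1
    obtain ⟨w2, hw2, z2, hz2, e2, f2⟩ := h2
    simp only at e1 e2 f1 f2
    refine ⟨a • w1 + a' • w2, hQsConv a a' ha ha' _ hw1 _ hw2,
      a • z1 + a' • z2, hPsConv a a' ha ha' _ hz1 _ hz2, ?_, ?_⟩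
    · show a • y1 + a' • y2 = c - Astar (a • w1 + a' • w2) - (a • z1 + a' • z2)
      rw [e1, e2, map_add, map_smul, map_smul]
      rw [smul_sub, smul_sub, smul_sub, smul_sub]
      have hc : a • c + a' • c = c := by rw [← add_smul, haa, one_smul]
      rw [show a • c - a • Astar w1 - a • z1 + (a' • c - a' • Astar w2 - a' • z2)
          = (a • c + a' • c) - (a • Astar w1 + a' • Astar w2) - (a • z1 + a' • z2) by abel, hc]
    · show a * r1 + a' * r2 ≤ pZ b (a • w1 + a' • w2)
      rw [map_add, map_smul, map_smul]
      simp only [smul_eq_mul]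
      have := mul_le_mul_of_nonneg_left f1 ha
      have := mul_le_mul_of_nonneg_left f2 ha'
      linarith
  -- main inclusion
  rintro ⟨y0, r0⟩ hp0
  by_contra hnc
  have hKclconv : Convex ℝ (closure (X := WeakBilin (pairYR pX)) Kset) :=
    Convex.closure (E := WeakBilin (pairYR pX)) hKconv
  obtain ⟨f, u, hfK, hfp0⟩ := geometric_hahn_banach_closed_point
    (E := WeakBilin (pairYR pX)) hKclconv isClosed_closure hnc
  obtain ⟨q, hq⟩ := weak_dual_repr (pairYR pX) f
  set xb := q.1 with hxb
  set β := q.2 with hβdef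
  have hfval : ∀ p : Y × ℝ, f p = pX xb p.1 + p.2 * β := fun p => by
    rw [hq p, pairYR_apply]
  have hKlt : ∀ w ∈ Qstar, ∀ z ∈ Pstar, ∀ r : ℝ, r ≤ pZ b w →
      pX xb (c - Astar w - z) + r * β < u := by
    intro w hw z hz r hr
    have hmem : ((c - Astar w - z, r) : Y × ℝ) ∈ Kset := by
      rw [hK]; exact ⟨w, hw, z, hz, rfl, hr⟩
    have := hfK _ (subset_closure hmem)
    rwa [hfval] at this
  have hcu : pX xb c < u := by
    have := hKlt 0 h0Qs 0 h0Ps 0 (by simp)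
    simpa using this
  have hβ : 0 ≤ β := by
    by_contra hβneg
    push_neg at hβneg
    refine no_lower_aux hβneg (v := pX xb c) (u := u) fun t ht0 => ?_
    have := hKlt 0 h0Qs 0 h0Ps (-t) (by simpa using neg_nonpos_of_nonneg ht0)
    simp only [map_zero, sub_zero] at this
    have heq : pX xb c + -t * β = pX xb c - t * β := by ring
    rw [heq] at this
    exact this
  -- xb ∈ P
  have hxbPs : ∀ z ∈ Pstar, 0 ≤ pX xb z := by
    intro z hz
    by_contra hneg
    push_neg at hneg
    refine no_lower_aux hneg (v := pX xb c) (u := u) fun t ht0 => ?_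
    have hzmem : t • z ∈ Pstar := by
      simpa using hPsConv t 0 ht0 le_rfl z hz z hz
    have := hKlt 0 h0Qs (t • z) hzmem 0 (by simp)
    simp only [map_zero, sub_zero, zero_mul, add_zero, map_sub, map_smul, smul_eq_mul] at this
    exact this
  have hxbP : xb ∈ P := by
    refine bipolar_mem pX P hPcone hPne hPc xb fun y hy => ?_
    exact hxbPs y (by rw [hPstar]; exact hy)
  -- A xb - β • b ∈ Q
  have hAxbQs : ∀ w ∈ Qstar, 0 ≤ pZ (A xb - β • b) w := by
    intro w hw
    by_contra hneg
    push_neg at hneg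
    have hdval : pZ (A xb - β • b) w = pZ (A xb) w - β * pZ b w := by
      rw [map_sub, LinearMap.sub_apply, map_smul, LinearMap.smul_apply, smul_eq_mul]
    rw [hdval] at hneg
    refine no_lower_aux hneg (v := pX xb c) (u := u) fun t ht0 => ?_
    have hwmem : t • w ∈ Qstar := by
      simpa using hQsConv t 0 ht0 le_rfl w hw w hw
    have hkey := hKlt (t • w) hwmem 0 h0Ps (t * pZ b w) (by rw [map_smul]; simp)
    simp only [sub_zero, map_smul, smul_eq_mul, map_sub] at hkey
    rw [hadj] at hkey
    have heq : pX xb c - t * (pZ (A xb) w - β * pZ b w)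
        = pX xb c - t * pZ (A xb) w + t * pZ b w * β := by ring
    rw [heq]
    exact hkey
  have hAxbQ : A xb - β • b ∈ Q := by
    refine bipolar_mem pZ Q hQcone hQne hQc _ fun w hw => ?_
    exact hAxbQs w (by rw [hQstar]; exact hw)
  -- value at p0
  have hfp0' : u < pX xb y0 + r0 * β := by
    have := hfp0
    rwa [hfval] at this
  rw [hM] at hp0
  rcases lt_or_eq_of_le hβ with hβpos | hβzero
  · -- β > 0
    set x' := β⁻¹ • xb with hx'
    have hx'P : x' ∈ P := by
      simpa using hPcone β⁻¹ 0 (inv_nonneg.mpr hβ) le_rfl xb hxbP xb hxbP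
    have hx'Q : A x' - b ∈ Q := by
      have he : A x' - b = β⁻¹ • (A xb - β • b) := by
        rw [hx', map_smul, smul_sub, smul_smul, inv_mul_cancel₀ (ne_of_gt hβpos), one_smul]
      rw [he]
      simpa using hQcone β⁻¹ 0 (inv_nonneg.mpr hβ) le_rfl _ hAxbQ _ hAxbQ
    have hx'FP : x' ∈ FP := by rw [hFP]; exact ⟨hx'P, hx'Q⟩
    have hval := hp0 x' hx'FP
    simp only at hval
    have hval' : r0 ≤ β⁻¹ * (pX xb c - pX xb y0) := by
      have : pX x' (c - y0) = β⁻¹ * (pX xb c - pX xb y0) := by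
        rw [hx', map_smul, LinearMap.smul_apply, smul_eq_mul, map_sub]
      rwa [this] at hval
    have heq : β⁻¹ * (pX xb c - pX xb y0) * β = pX xb c - pX xb y0 := by
      field_simp
    have hmul := mul_le_mul_of_nonneg_right hval' (le_of_lt hβpos)
    rw [heq] at hmul
    linarith
  · -- β = 0
    have hβ0 : β = 0 := hβzero.symm
    have hAxbQ' : A xb ∈ Q := by
      have := hAxbQ
      rwa [hβ0, zero_smul, sub_zero] at this
    obtain ⟨x0, hx0⟩ := hFPne
    have hx0' := hx0
    rw [hFP] at hx0'
    obtain ⟨hx0P, hx0Q⟩ := hx0'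
    have hd : pX xb (c - y0) < 0 := by
      rw [hβ0] at hfp0'
      rw [map_sub]
      linarith
    set d := pX xb (c - y0) with hdd
    set e := pX x0 (c - y0) with hee
    set t : ℝ := max 0 ((r0 - e - 1) / d) with ht
    have ht0 : 0 ≤ t := le_max_left _ _
    have hxtP : x0 + t • xb ∈ P := by
      simpa using hPcone 1 t zero_le_one ht0 x0 hx0P xb hxbP
    have hxtQ : A (x0 + t • xb) - b ∈ Q := by
      have he : A (x0 + t • xb) - b = (1 : ℝ) • (A x0 - b) + t • A xb := by
        rw [map_add, map_smul, one_smul]; abel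
      rw [he]
      exact hQcone 1 t zero_le_one ht0 _ hx0Q _ hAxbQ'
    have hxtFP : x0 + t • xb ∈ FP := by rw [hFP]; exact ⟨hxtP, hxtQ⟩
    have hval := hp0 _ hxtFP
    simp only at hval
    have hval' : r0 ≤ e + t * d := by
      have : pX (x0 + t • xb) (c - y0) = e + t * d := by
        rw [map_add, LinearMap.add_apply, map_smul, LinearMap.smul_apply, smul_eq_mul, hee, hdd]
      rwa [this] at hval
    have htd : t * d ≤ r0 - e - 1 := by
      have h1 : (r0 - e - 1) / d ≤ t := le_max_right _ _
      have := mul_le_mul_of_nonpos_right h1 (le_of_lt hd)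
      rwa [div_mul_cancel₀ _ (ne_of_lt hd)] at this
    linarith
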